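/- arXiv:1911.03569 — 5 statements merged into one kernel-verified Lean document; each statement's English description precedes it below -/
import Mathlib

section
/- Let V ⊆ 𝕜^E be a linear subspace over a field 𝕜, with E finite. Then the function r : 2^E → ℤ≥0 defined by r(S) = dim(𝕜^S / (V ∩ 𝕜^S)) (where 𝕜^S is the subspace of vectors supported on S) is the rank function of a matroid on E. -/
/-- A function `r : Finset E → ℕ` is the rank function of a matroid on `E`. -/
def IsRankFn {E : Type*} [DecidableEq E] (r : Finset E → ℕ) : Prop :=
  r ∅ = 0 ∧
  (∀ S T : Finset E, r (S ∪ T) + r (S ∩ T) ≤ r S + r T) ∧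
  (∀ (S : Finset E) (x : E), x ∉ S → r S ≤ r (insert x S) ∧ r (insert x S) ≤ r S + 1)

/-- `𝕜^S`: the subspace of `E → 𝕜` consisting of vectors vanishing outside `S`. -/
def coordSubmodule (𝕜 : Type*) [Field 𝕜] {E : Type*} (S : Finset E) :
    Submodule 𝕜 (E → 𝕜) :=
  Submodule.pi {e | e ∉ S} (fun _ => ⊥)

/-- The rank function of the tropicalization of a subspace `V ⊆ 𝕜^E`:
`r(S) = dim (𝕜^S / (V ∩ 𝕜^S))`. -/
noncomputable def tropRank (𝕜 : Type*) [Field 𝕜] {E : Type*}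
    (V : Submodule 𝕜 (E → 𝕜)) (S : Finset E) : ℕ :=
  Module.finrank 𝕜
    (↥(coordSubmodule 𝕜 S) ⧸ Submodule.comap (coordSubmodule 𝕜 S).subtype V)

open Submodule Module

section Aux
variable (𝕜 : Type*) [Field 𝕜] {E : Type*} [DecidableEq E]

lemma mem_coordSubmodule {S : Finset E} {v : E → 𝕜} :
    v ∈ coordSubmodule 𝕜 S ↔ ∀ e ∉ S, v e = 0 := by
  simp [coordSubmodule, Submodule.mem_pi]

lemma coord_empty : coordSubmodule 𝕜 (∅ : Finset E) = ⊥ := by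
  ext v; simp [mem_coordSubmodule, funext_iff]

lemma coord_mono {S T : Finset E} (h : S ⊆ T) :
    coordSubmodule 𝕜 S ≤ coordSubmodule 𝕜 T := by
  intro v hv
  rw [mem_coordSubmodule] at *
  exact fun e he => hv e (fun hs => he (h hs))

lemma coord_union (S T : Finset E) :
    coordSubmodule 𝕜 (S ∪ T) = coordSubmodule 𝕜 S ⊔ coordSubmodule 𝕜 T := by
  apply le_antisymm
  · intro v hv
    rw [mem_coordSubmodule] at hv
    have h1 : (fun i => if i ∈ S then v i else 0) ∈ coordSubmodule 𝕜 S := by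
      rw [mem_coordSubmodule]; intro e he; simp [he]
    have h2 : (v - fun i => if i ∈ S then v i else 0) ∈ coordSubmodule 𝕜 T := by
      rw [mem_coordSubmodule]; intro e he
      by_cases hs : e ∈ S
      · simp [hs]
      · simp [hs, hv e (by simp [hs, he])]
    have := Submodule.add_mem_sup (S := coordSubmodule 𝕜 S) (T := coordSubmodule 𝕜 T) h1 h2
    simpa using this
  · exact sup_le (coord_mono 𝕜 Finset.subset_union_left)
      (coord_mono 𝕜 Finset.subset_union_right)

lemma coord_inf (S T : Finset E) :
    coordSubmodule 𝕜 S ⊓ coordSubmodule 𝕜 T = coordSubmodule 𝕜 (S ∩ T) := by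
  ext v
  simp only [Submodule.mem_inf, mem_coordSubmodule, Finset.mem_inter]
  constructor
  · rintro ⟨hS, hT⟩ e he
    by_cases hs : e ∈ S
    · exact hT e (fun ht => he ⟨hs, ht⟩)
    · exact hS e hs
  · intro h
    exact ⟨fun e he => h e (fun ⟨h1, _⟩ => he h1), fun e he => h e (fun ⟨_, h2⟩ => he h2)⟩

lemma coord_singleton (x : E) :
    coordSubmodule 𝕜 ({x} : Finset E) = Submodule.span 𝕜 {Pi.single x (1 : 𝕜)} := by
  apply le_antisymm
  · intro v hv
    rw [mem_coordSubmodule] at hv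
    have : v = v x • (Pi.single x (1 : 𝕜) : E → 𝕜) := by
      funext i
      by_cases h : i = x
      · subst h; simp
      · simp [Pi.single_eq_of_ne h, hv i (by simp [h])]
    rw [this]
    exact Submodule.smul_mem _ _ (Submodule.mem_span_singleton_self _)
  · rw [Submodule.span_le, Set.singleton_subset_iff]
    rw [SetLike.mem_coe, mem_coordSubmodule]
    intro e he
    exact Pi.single_eq_of_ne (by simpa using he) 1

lemma tropRank_eq {E : Type*} [DecidableEq E] (V : Submodule 𝕜 (E → 𝕜)) (S : Finset E) :
    tropRank 𝕜 V S = finrank 𝕜 (Submodule.map V.mkQ (coordSubmodule 𝕜 S)) := by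
  set g : coordSubmodule 𝕜 S →ₗ[𝕜] (E → 𝕜) ⧸ V := V.mkQ.comp (coordSubmodule 𝕜 S).subtype
  have hker : LinearMap.ker g = Submodule.comap (coordSubmodule 𝕜 S).subtype V := by
    rw [LinearMap.ker_comp, Submodule.ker_mkQ]
  have hrange : LinearMap.range g = Submodule.map V.mkQ (coordSubmodule 𝕜 S) := by
    rw [LinearMap.range_comp, Submodule.range_subtype]
  rw [tropRank, ← hker, ← hrange]
  exact (g.quotKerEquivRange).finrank_eq

end Aux

/-- For a subspace `V ⊆ 𝕜^E` with `E` finite, `S ↦ dim(𝕜^S/(V ∩ 𝕜^S))`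
is the rank function of a matroid on `E`. -/
theorem stmt1 {𝕜 : Type*} [Field 𝕜] {E : Type*} [Fintype E] [DecidableEq E]
    (V : Submodule 𝕜 (E → 𝕜)) :
    IsRankFn (tropRank 𝕜 V) := by
  have hQ : FiniteDimensional 𝕜 ((E → 𝕜) ⧸ V) := inferInstance
  set m : Finset E → Submodule 𝕜 ((E → 𝕜) ⧸ V) :=
    fun S => Submodule.map V.mkQ (coordSubmodule 𝕜 S) with hm
  have hre : ∀ S, tropRank 𝕜 V S = Module.finrank 𝕜 (m S) := fun S => tropRank_eq 𝕜 V S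
  refine ⟨?_, ?_, ?_⟩
  · rw [hre, hm]
    simp [coord_empty]
  · intro S T
    rw [hre, hre, hre, hre]
    have hsup : m (S ∪ T) = m S ⊔ m T := by
      rw [hm]; simp only [coord_union, Submodule.map_sup]
    have hinf : m (S ∩ T) ≤ m S ⊓ m T := by
      rw [hm, le_inf_iff]
      exact ⟨Submodule.map_mono (coord_mono 𝕜 Finset.inter_subset_left),
        Submodule.map_mono (coord_mono 𝕜 Finset.inter_subset_right)⟩
    calc Module.finrank 𝕜 ↥(m (S ∪ T)) + Module.finrank 𝕜 ↥(m (S ∩ T))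
        ≤ Module.finrank 𝕜 ↥(m S ⊔ m T) + Module.finrank 𝕜 ↥(m S ⊓ m T) := by
          rw [hsup]
          exact Nat.add_le_add le_rfl (Submodule.finrank_mono hinf)
      _ = Module.finrank 𝕜 ↥(m S) + Module.finrank 𝕜 ↥(m T) :=
          Submodule.finrank_sup_add_finrank_inf_eq _ _
  · intro S x hx
    have hins : m (insert x S) = m {x} ⊔ m S := by
      simp only [hm]
      have : insert x S = {x} ∪ S := by ext; simp
      rw [this]
      simp only [coord_union, Submodule.map_sup]
    have hx1 : Module.finrank 𝕜 ↥(m {x}) ≤ 1 := by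
      show Module.finrank 𝕜 ↥(Submodule.map V.mkQ (coordSubmodule 𝕜 ({x} : Finset E))) ≤ 1
      rw [coord_singleton, Submodule.map_span, Set.image_singleton]
      by_cases h : V.mkQ (Pi.single x (1:𝕜)) = 0
      · rw [h, Submodule.span_zero_singleton]
        simp
      · rw [finrank_span_singleton h]
    constructor
    · rw [hre, hre]
      exact Submodule.finrank_mono (Submodule.map_mono (coord_mono 𝕜 (Finset.subset_insert x S)))
    · rw [hre, hre, hins]
      calc Module.finrank 𝕜 ↥(m {x} ⊔ m S)
          ≤ Module.finrank 𝕜 ↥(m {x} ⊔ m S) + Module.finrank 𝕜 ↥(m {x} ⊓ m S) := Nat.le_add_right _ _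
        _ = Module.finrank 𝕜 ↥(m {x}) + Module.finrank 𝕜 ↥(m S) :=
            Submodule.finrank_sup_add_finrank_inf_eq _ _
        _ ≤ Module.finrank 𝕜 ↥(m S) + 1 := by omega
end

section
/- Let k ≥ 1 and d ≥ k, and let f ∈ ℂ[x,y] be a nonzero homogeneous polynomial of degree k with f(1,0) ≠ 0 and f(0,1) ≠ 0. Then the ideal (f) contains a polynomial of the form c₁x^d + c₂y^d with (c₁,c₂) ≠ (0,0) if and only if the roots of f(x,1) (counted as a multiset) are k distinct complex numbers z₁,…,z_k such that (z_i/z_j)^d = 1 for all i, j (i.e., they are distinct vertices of a regular d-gon centered at 0). -/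
open MvPolynomial

open MvPolynomial Polynomial in
noncomputable def deh : MvPolynomial (Fin 2) ℂ →ₐ[ℂ] Polynomial ℂ :=
  MvPolynomial.aeval ![Polynomial.X, 1]

open MvPolynomial in
noncomputable def homz (n : ℕ) (g : Polynomial ℂ) : MvPolynomial (Fin 2) ℂ :=
  ∑ i ∈ Finset.range (n+1), C (g.coeff i) * X 0 ^ i * X 1 ^ (n - i)

open MvPolynomial in
lemma homz_isHomogeneous (n : ℕ) (g : Polynomial ℂ) : (homz n g).IsHomogeneous n := by
  apply MvPolynomial.IsHomogeneous.sum
  intro i hi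
  rw [Finset.mem_range] at hi
  have h1 : (C (g.coeff i) * X 0 ^ i * X 1 ^ (n-i) : MvPolynomial (Fin 2) ℂ).IsHomogeneous (i + (n - i)) :=
    (MvPolynomial.isHomogeneous_C_mul_X_pow _ 0 i).mul (MvPolynomial.isHomogeneous_X_pow 1 (n-i))
  have : i + (n - i) = n := by omega
  rwa [this] at h1

open MvPolynomial in
lemma deh_C_mul_pows (c : ℂ) (i j : ℕ) :
    deh (C c * X 0 ^ i * X 1 ^ j) = Polynomial.C c * Polynomial.X ^ i := by
  simp [deh]

open MvPolynomial in
lemma deh_homz {n : ℕ} {g : Polynomial ℂ} (h : g.natDegree ≤ n) : deh (homz n g) = g := by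
  rw [homz, map_sum]
  simp_rw [deh_C_mul_pows]
  simp_rw [Polynomial.C_mul_X_pow_eq_monomial]
  exact (Polynomial.as_sum_range' g (n+1) (by omega)).symm

open MvPolynomial in
lemma homz_sum {ι : Type*} (n : ℕ) (s : Finset ι) (g : ι → Polynomial ℂ) :
    homz n (∑ j ∈ s, g j) = ∑ j ∈ s, homz n (g j) := by
  unfold homz
  rw [Finset.sum_comm]
  congr 1
  funext i
  rw [Polynomial.finset_sum_coeff, map_sum, Finset.sum_mul, Finset.sum_mul]

open MvPolynomial in
lemma homz_C_mul_X_pow {n a : ℕ} (c : ℂ) (h : a ≤ n) :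
    homz n (Polynomial.C c * Polynomial.X ^ a) = C c * X 0 ^ a * X 1 ^ (n - a) := by
  unfold homz
  rw [Finset.sum_eq_single a]
  · simp
  · intro b hb hba
    simp only [Polynomial.coeff_C_mul, Polynomial.coeff_X_pow, if_neg hba, mul_zero, map_zero,
      zero_mul]
  · intro ha; exact absurd (Finset.mem_range.mpr (by omega)) ha

open MvPolynomial in
lemma deh_monomial (m : Fin 2 →₀ ℕ) (c : ℂ) :
    deh (monomial m c) = Polynomial.C c * Polynomial.X ^ (m 0) := by
  simp [deh, MvPolynomial.aeval_monomial, Finsupp.prod_pow, Fin.prod_univ_two,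
    Algebra.smul_def]

open MvPolynomial in
lemma monomial_eq_two (m : Fin 2 →₀ ℕ) (c : ℂ) :
    monomial m c = C c * X 0 ^ (m 0) * X 1 ^ (m 1) := by
  rw [MvPolynomial.monomial_eq, Finsupp.prod_pow, Fin.prod_univ_two, mul_assoc]

open MvPolynomial in
lemma homz_deh {n : ℕ} {f : MvPolynomial (Fin 2) ℂ} (hf : f.IsHomogeneous n) :
    homz n (deh f) = f := by
  conv_rhs => rw [f.as_sum]
  rw [show deh f = ∑ m ∈ f.support, deh (monomial m (coeff m f)) by
    rw [← map_sum]; congr 1; exact f.as_sum]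
  rw [homz_sum]
  apply Finset.sum_congr rfl
  intro m hm
  have hdeg : m 0 + m 1 = n := by
    have h1 := hf (MvPolynomial.mem_support_iff.mp hm)
    rw [show ((Finsupp.weight 1) m : ℕ) = m.degree by rw [Finsupp.degree_eq_weight_one]; rfl] at h1
    rw [← h1, Finsupp.degree_apply, Finset.sum_subset (Finset.subset_univ m.support),
      Fin.sum_univ_two]
    intro i _ hi
    exact Finsupp.notMem_support_iff.mp hi
  rw [deh_monomial, homz_C_mul_X_pow _ (by omega), monomial_eq_two]
  congr 2
  omega

open MvPolynomial in
lemma eval10_homz (n : ℕ) (g : Polynomial ℂ) :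
    eval (![1, 0] : Fin 2 → ℂ) (homz n g) = g.coeff n := by
  unfold homz
  rw [map_sum, Finset.sum_eq_single n]
  · simp
  · intro b hb hbn
    rw [Finset.mem_range] at hb
    simp [zero_pow (show n - b ≠ 0 by omega)]
  · intro h; exact absurd (Finset.mem_range.mpr (by omega)) h

open MvPolynomial in
lemma eval01_homz (n : ℕ) (g : Polynomial ℂ) :
    eval (![0, 1] : Fin 2 → ℂ) (homz n g) = g.coeff 0 := by
  unfold homz
  rw [map_sum, Finset.sum_eq_single 0]
  · simp
  · intro b hb hbn
    simp [zero_pow hbn]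
  · intro h; exact absurd (Finset.mem_range.mpr (by omega)) h

open MvPolynomial in
lemma natDegree_deh_le {n : ℕ} {f : MvPolynomial (Fin 2) ℂ} (hf : f.IsHomogeneous n) :
    (deh f).natDegree ≤ n := by
  conv_lhs => rw [← homz_deh hf]
  rw [homz, map_sum]
  apply Polynomial.natDegree_sum_le_of_forall_le
  intro i hi
  rw [Finset.mem_range] at hi
  rw [deh_C_mul_pows]
  exact (Polynomial.natDegree_C_mul_le _ _).trans (by simp; omega)

open MvPolynomial in
lemma deh_coeff_n {n : ℕ} {f : MvPolynomial (Fin 2) ℂ} (hf : f.IsHomogeneous n) :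
    (deh f).coeff n = eval (![1, 0] : Fin 2 → ℂ) f := by
  conv_rhs => rw [← homz_deh hf]
  rw [eval10_homz]

open MvPolynomial in
lemma deh_coeff_0 {n : ℕ} {f : MvPolynomial (Fin 2) ℂ} (hf : f.IsHomogeneous n) :
    (deh f).coeff 0 = eval (![0, 1] : Fin 2 → ℂ) f := by
  conv_rhs => rw [← homz_deh hf]
  rw [eval01_homz]

open MvPolynomial in
lemma deh_inj {n : ℕ} {f g : MvPolynomial (Fin 2) ℂ} (hf : f.IsHomogeneous n)
    (hg : g.IsHomogeneous n) (h : deh f = deh g) : f = g := by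
  rw [← homz_deh hf, ← homz_deh hg, h]

open MvPolynomial in
@[simp] lemma deh_X0 : deh (X 0) = Polynomial.X := by simp [deh]
open MvPolynomial in
@[simp] lemma deh_X1 : deh (X 1) = 1 := by simp [deh]
open MvPolynomial in
@[simp] lemma deh_C (c : ℂ) : deh (C c) = Polynomial.C c := by simp [deh]

open MvPolynomial Polynomial in
lemma stmt8_rev (k d : ℕ) (hk : 1 ≤ k) (hd : k ≤ d)
    (f : MvPolynomial (Fin 2) ℂ) (hf : f.IsHomogeneous k)
    (z : Fin k → ℂ) (hzinj : Function.Injective z) (hzd : ∀ i j, (z i / z j) ^ d = 1)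
    (c : ℂ) (hc : c ≠ 0) (hfeq : f = MvPolynomial.C c * ∏ i : Fin k, (X 0 - MvPolynomial.C (z i) * X 1)) :
    ∃ c₁ c₂ : ℂ, (c₁, c₂) ≠ ((0 : ℂ), (0 : ℂ)) ∧
      (MvPolynomial.C c₁ * X 0 ^ d + MvPolynomial.C c₂ * X 1 ^ d) ∈ Ideal.span {f} := by
  have hd1 : 1 ≤ d := hk.trans hd
  have hz0 : ∀ i, z i ≠ 0 := by
    intro i h
    have := hzd i i
    rw [h, div_zero, zero_pow (by omega)] at this
    exact zero_ne_one this
  set i₀ : Fin k := ⟨0, hk⟩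
  set w : ℂ := z i₀ ^ d with hw
  have hw0 : w ≠ 0 := pow_ne_zero _ (hz0 i₀)
  have hzw : ∀ i, z i ^ d = w := by
    intro i
    have := hzd i i₀
    rwa [div_pow, div_eq_one_iff_eq (pow_ne_zero _ (hz0 i₀))] at this
  set G : Polynomial ℂ := Polynomial.X ^ d - Polynomial.C w with hG
  have hGm : G.Monic := monic_X_pow_sub_C w (by omega)
  have hGne : G ≠ 0 := hGm.ne_zero
  set p : Polynomial ℂ := ∏ i : Fin k, (Polynomial.X - Polynomial.C (z i)) with hp
  have hpdvd : p ∣ G := by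
    have hM : (Finset.univ.val.map z) ≤ G.roots := by
      rw [Multiset.le_iff_subset (Finset.univ.nodup.map hzinj)]
      intro a ha
      obtain ⟨i, _, rfl⟩ := Multiset.mem_map.mp ha
      rw [Polynomial.mem_roots hGne]
      simp [hG, Polynomial.IsRoot, hzw i]
    have h1 : ((Finset.univ.val.map z).map (fun a => Polynomial.X - Polynomial.C a)).prod ∣
        (G.roots.map (fun a => Polynomial.X - Polynomial.C a)).prod :=
      Multiset.prod_dvd_prod_of_le (Multiset.map_le_map hM)
    have h2 := h1.trans (prod_multiset_X_sub_C_dvd G)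
    rw [Multiset.map_map] at h2
    rw [hp, Finset.prod_eq_multiset_prod]
    exact h2
  obtain ⟨q, hq⟩ := hpdvd
  have hpm : p.Monic := monic_prod_of_monic _ _ (fun i _ => monic_X_sub_C (z i))
  have hpdeg : p.natDegree = k := by
    rw [hp, natDegree_prod_of_monic _ _ (fun i _ => monic_X_sub_C (z i))]
    simp
  have hqne : q ≠ 0 := by rintro rfl; rw [mul_zero] at hq; exact hGne hq
  have hqdeg : q.natDegree ≤ d - k := by
    have : G.natDegree = p.natDegree + q.natDegree := by
      rw [hq, Polynomial.natDegree_mul hpm.ne_zero hqne]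
    rw [natDegree_X_pow_sub_C, hpdeg] at this
    omega
  set Q := homz (d - k) q with hQ
  have hmain : f * Q = MvPolynomial.C c * X 0 ^ d + MvPolynomial.C (-(c*w)) * X 1 ^ d := by
    apply deh_inj (n := d)
    · have := hf.mul (homz_isHomogeneous (d - k) q)
      rwa [Nat.add_sub_cancel' hd] at this
    · exact (isHomogeneous_C_mul_X_pow c 0 d).add (isHomogeneous_C_mul_X_pow (-(c*w)) 1 d)
    · have hdehf : deh f = Polynomial.C c * p := by
        rw [hfeq, map_mul, map_prod, deh_C]
        congr 1
        apply Finset.prod_congr rfl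
        intro i _
        rw [map_sub, map_mul, deh_X0, deh_X1, deh_C, mul_one]
      rw [map_mul, map_add, map_mul, map_mul, hdehf, hQ, deh_homz hqdeg,
        map_pow, map_pow, deh_X0, deh_X1, deh_C, deh_C, mul_assoc, ← hq, hG]
      rw [map_neg, map_mul]
      ring
  refine ⟨c, -(c*w), ?_, Ideal.mem_span_singleton.mpr ⟨Q, hmain.symm⟩⟩
  simp [Prod.ext_iff, hc]

open MvPolynomial Polynomial in
lemma stmt8_fwd (k d : ℕ) (hk : 1 ≤ k) (hd : k ≤ d)
    (f : MvPolynomial (Fin 2) ℂ) (hf : f.IsHomogeneous k)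
    (h10 : MvPolynomial.eval (![1, 0] : Fin 2 → ℂ) f ≠ 0)
    (h01 : MvPolynomial.eval (![0, 1] : Fin 2 → ℂ) f ≠ 0)
    (c₁ c₂ : ℂ) (hne : (c₁, c₂) ≠ ((0 : ℂ), (0 : ℂ)))
    (hdvd : f ∣ MvPolynomial.C c₁ * X 0 ^ d + MvPolynomial.C c₂ * X 1 ^ d) :
    ∃ z : Fin k → ℂ, Function.Injective z ∧ (∀ i j, (z i / z j) ^ d = 1) ∧
      ∃ c : ℂ, c ≠ 0 ∧ f = MvPolynomial.C c * ∏ i : Fin k, (X 0 - MvPolynomial.C (z i) * X 1) := by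
  classical
  have hd1 : 1 ≤ d := hk.trans hd
  set g : Polynomial ℂ := deh f with hgdef
  have hgco : g.coeff k = MvPolynomial.eval (![1, 0] : Fin 2 → ℂ) f := deh_coeff_n hf
  have hgdeg : g.natDegree = k :=
    le_antisymm (natDegree_deh_le hf) (le_natDegree_of_ne_zero (by rw [hgco]; exact h10))
  have hgne : g ≠ 0 := fun h => h10 (by rw [← hgco, h, Polynomial.coeff_zero])
  have hg0 : g.coeff 0 ≠ 0 := by rw [deh_coeff_0 hf]; exact h01
  have hglead : g.leadingCoeff = MvPolynomial.eval (![1, 0] : Fin 2 → ℂ) f := by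
    rw [Polynomial.leadingCoeff, hgdeg, hgco]
  have hgdvd : g ∣ Polynomial.C c₁ * Polynomial.X ^ d + Polynomial.C c₂ := by
    have h := map_dvd deh hdvd
    simpa using h
  -- c₁ ≠ 0
  have hc₁ : c₁ ≠ 0 := by
    intro h0
    have hc₂ : c₂ ≠ 0 := by rintro h0'; exact hne (by rw [h0, h0'])
    rw [h0] at hgdvd
    simp only [map_zero, zero_mul, zero_add] at hgdvd
    have := Polynomial.natDegree_le_of_dvd hgdvd (Polynomial.C_ne_zero.mpr hc₂)
    rw [hgdeg, Polynomial.natDegree_C] at this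
    omega
  -- c₂ ≠ 0
  have hc₂ : c₂ ≠ 0 := by
    intro h0
    rw [h0] at hgdvd
    simp only [map_zero, zero_mul, add_zero] at hgdvd
    obtain ⟨x, hx⟩ := Complex.exists_root (f := g)
      (by rw [Polynomial.degree_eq_natDegree hgne, hgdeg]; exact_mod_cast hk)
    have hxr := Polynomial.eval_eq_zero_of_dvd_of_eval_eq_zero hgdvd hx
    simp only [Polynomial.eval_mul, Polynomial.eval_pow, Polynomial.eval_C,
      Polynomial.eval_X, mul_eq_zero, pow_eq_zero_iff (by omega : d ≠ 0)] at hxr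
    rcases hxr with h | h
    · exact hc₁ h
    · subst h
      exact hg0 (by rw [Polynomial.coeff_zero_eq_eval_zero]; exact hx)
  set w : ℂ := -c₂ / c₁ with hwdef
  have hw0 : w ≠ 0 := div_ne_zero (neg_ne_zero.mpr hc₂) hc₁
  have hc₁w : c₁ * w = -c₂ := by rw [hwdef]; field_simp
  have hB : Polynomial.C c₁ * Polynomial.X ^ d + Polynomial.C c₂ =
      Polynomial.C c₁ * (Polynomial.X ^ d - Polynomial.C w) := by
    rw [mul_sub, ← Polynomial.C_mul, hc₁w, map_neg, sub_neg_eq_add]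
  have hgdvd' : g ∣ Polynomial.X ^ d - Polynomial.C w := by
    refine hgdvd.trans ⟨Polynomial.C c₁⁻¹, ?_⟩
    rw [hB, mul_comm, ← mul_assoc, ← Polynomial.C_mul, inv_mul_cancel₀ hc₁,
      Polynomial.C_1, one_mul]
  have hsq : Squarefree g :=
    (Polynomial.separable_X_pow_sub_C w
      (by exact_mod_cast (Nat.cast_ne_zero (R := ℂ)).mpr (by omega)) hw0).squarefree.squarefree_of_dvd hgdvd'
  have hsep : g.Separable := PerfectField.separable_iff_squarefree.mpr hsq
  have hnodup : g.roots.Nodup := Polynomial.nodup_roots hsep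
  have hcard : g.roots.card = k := by
    have h := (IsAlgClosed.splits g).natDegree_eq_card_roots
    rw [← hgdeg, h]
  set s : Finset ℂ := g.roots.toFinset with hsdef
  have hsval : s.val = g.roots := by
    rw [hsdef, Multiset.toFinset_val, Multiset.dedup_eq_self.mpr hnodup]
  have hscard : s.card = k := by
    rw [hsdef, Multiset.toFinset_card_of_nodup hnodup, hcard]
  set e : s ≃ Fin k := Finset.equivFinOfCardEq hscard with hedef
  refine ⟨fun i => ((e.symm i : s) : ℂ), ?_, ?_, ?_⟩
  · intro i j h
    exact e.symm.injective (Subtype.ext h)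
  · have hroot : ∀ i : Fin k, ((e.symm i : s) : ℂ) ∈ g.roots := fun i => by
      rw [← hsval]; exact (e.symm i).2
    have hpow : ∀ i : Fin k, ((e.symm i : s) : ℂ) ^ d = w := by
      intro i
      have h1 := Polynomial.eval_eq_zero_of_dvd_of_eval_eq_zero hgdvd'
        ((Polynomial.mem_roots hgne).mp (hroot i))
      simp only [Polynomial.eval_sub, Polynomial.eval_pow, Polynomial.eval_X,
        Polynomial.eval_C, sub_eq_zero] at h1
      exact h1
    intro i j
    rw [div_pow, hpow i, hpow j, div_self hw0]
  · refine ⟨MvPolynomial.eval (![1, 0] : Fin 2 → ℂ) f, h10, ?_⟩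
    have hhomp : (∏ i : Fin k, (MvPolynomial.X 0 - MvPolynomial.C ((e.symm i : s) : ℂ) * MvPolynomial.X 1) :
        MvPolynomial (Fin 2) ℂ).IsHomogeneous k := by
      have hp := MvPolynomial.IsHomogeneous.prod Finset.univ
        (fun i : Fin k => (MvPolynomial.X 0 - MvPolynomial.C ((e.symm i : s) : ℂ) * MvPolynomial.X 1))
        (fun _ => 1)
        (fun i _ => (MvPolynomial.isHomogeneous_X ℂ (0 : Fin 2)).sub (MvPolynomial.isHomogeneous_C_mul_X _ (1 : Fin 2)))
      rw [Finset.sum_const, smul_eq_mul, mul_one, Finset.card_univ, Fintype.card_fin] at hp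
      beta_reduce at hp
      exact hp
    apply deh_inj hf (hhomp.C_mul _)
    have hgfact := (IsAlgClosed.splits g).eq_prod_roots
    have hprodeq : (g.roots.map fun a => Polynomial.X - Polynomial.C a).prod =
        ∏ i : Fin k, (Polynomial.X - Polynomial.C ((e.symm i : s) : ℂ)) := by
      rw [← hsval, ← Finset.prod_eq_multiset_prod, ← Finset.prod_coe_sort]
      exact (Equiv.prod_comp e.symm fun x : s => Polynomial.X - Polynomial.C (x : ℂ)).symm
    have hrhs : deh (MvPolynomial.C (MvPolynomial.eval (![1, 0] : Fin 2 → ℂ) f) *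
        ∏ i : Fin k, (MvPolynomial.X 0 - MvPolynomial.C ((e.symm i : s) : ℂ) * MvPolynomial.X 1)) =
        Polynomial.C (MvPolynomial.eval (![1, 0] : Fin 2 → ℂ) f) *
        ∏ i : Fin k, (Polynomial.X - Polynomial.C ((e.symm i : s) : ℂ)) := by
      rw [map_mul, map_prod, deh_C]
      congr 1
      apply Finset.prod_congr rfl
      intro i _
      rw [map_sub, map_mul, deh_X0, deh_X1, deh_C, mul_one]
    rw [hrhs, ← hgdef, hgfact, hglead, hprodeq]

/-- Let `k ≥ 1`, `d ≥ k`, and let `f ∈ ℂ[x,y]` be a nonzero homogeneous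
polynomial of degree `k` with `f(1,0) ≠ 0` and `f(0,1) ≠ 0`. Then `(f)` contains a
polynomial `c₁x^d + c₂y^d` with `(c₁,c₂) ≠ (0,0)` if and only if the roots of `f(x,1)`
are `k` distinct complex numbers `z₁,…,z_k` with `(z_i/z_j)^d = 1` for all `i,j`
(i.e. `f = c·∏(x - z_i y)` with the `z_i` distinct vertices of a regular `d`-gon
centered at `0`). -/
theorem stmt8 (k d : ℕ) (hk : 1 ≤ k) (hd : k ≤ d)
    (f : MvPolynomial (Fin 2) ℂ) (hf0 : f ≠ 0) (hf : f.IsHomogeneous k)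
    (h10 : MvPolynomial.eval (![1, 0] : Fin 2 → ℂ) f ≠ 0)
    (h01 : MvPolynomial.eval (![0, 1] : Fin 2 → ℂ) f ≠ 0) :
    (∃ c₁ c₂ : ℂ, (c₁, c₂) ≠ ((0 : ℂ), (0 : ℂ)) ∧
        (C c₁ * X 0 ^ d + C c₂ * X 1 ^ d) ∈ Ideal.span {f}) ↔
    (∃ z : Fin k → ℂ, Function.Injective z ∧ (∀ i j, (z i / z j) ^ d = 1) ∧
        ∃ c : ℂ, c ≠ 0 ∧ f = C c * ∏ i : Fin k, (X 0 - C (z i) * X 1)) := by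
  constructor
  · rintro ⟨c₁, c₂, hne, hmem⟩
    exact stmt8_fwd k d hk hd f hf h10 h01 c₁ c₂ hne (Ideal.mem_span_singleton.mp hmem)
  · rintro ⟨z, hzinj, hzd, c, hc, hfeq⟩
    exact stmt8_rev k d hk hd f hf z hzinj hzd c hc hfeq
end

section
/- Let k ≥ 1, d ≥ k, and let z₁, …, z_k be distinct nonzero complex numbers that are d-th roots of a common nonzero complex number c (i.e., z_i^d = c for all i). Then the complete homogeneous symmetric polynomial h_j(z₁,…,z_k) vanishes for every j with d−k+1 ≤ j ≤ d−1. -/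
open Polynomial PowerSeries Finset

/-- geometric series inverse of `1 - aX` -/
lemma geom_inv (a : ℂ) :
    ((1 : ℂ⟦X⟧) - PowerSeries.C a * PowerSeries.X) * PowerSeries.mk (fun n => a ^ n) = 1 := by
  ext n
  cases n with
  | zero => simp
  | succ n =>
    rw [sub_mul, one_mul, map_sub, mul_assoc, PowerSeries.coeff_C_mul,
      PowerSeries.coeff_succ_X_mul, PowerSeries.coeff_mk, PowerSeries.coeff_mk, pow_succ,
      PowerSeries.coeff_one, if_neg n.succ_ne_zero]
    ring

/-- Let `k ≥ 1`, `d ≥ k`, and let `z₁,…,z_k` be distinct complex numbers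
with `z_i^d = c` for a common nonzero `c`. Then the complete homogeneous symmetric
polynomial `h_j(z₁,…,z_k) = Σ_{i₁+⋯+i_k=j} z₁^{i₁}⋯z_k^{i_k}` vanishes for every
`j` with `d−k+1 ≤ j ≤ d−1`. -/
theorem stmt9 (k d : ℕ) (hk : 1 ≤ k) (hd : k ≤ d)
    (c : ℂ) (hc : c ≠ 0) (z : Fin k → ℂ) (hinj : Function.Injective z)
    (hz : ∀ i, z i ^ d = c)
    (j : ℕ) (hj1 : d - k + 1 ≤ j) (hj2 : j ≤ d - 1) :
    ∑ μ ∈ Finset.Nat.antidiagonalTuple k j, ∏ i : Fin k, z i ^ μ i = 0 := by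
  have hd1 : 1 ≤ d := hk.trans hd
  have hjd : j < d := lt_of_le_of_lt hj2 (Nat.sub_lt hd1 one_pos)
  have hz0 : ∀ i, z i ≠ 0 := by
    intro i h
    apply hc
    rw [← hz i, h, zero_pow (by omega : d ≠ 0)]
  -- the polynomial P = ∏ (1 - zᵢ X)
  set P : ℂ[X] := ∏ i : Fin k, (1 - Polynomial.C (z i) * Polynomial.X) with hP
  -- P divides 1 - c X^d
  have hdvd : P ∣ (1 - Polynomial.C c * Polynomial.X ^ d) := by
    have hfac : ∀ i : Fin k, (1 - Polynomial.C (z i) * Polynomial.X)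
        = Polynomial.C (-(z i)) * (Polynomial.X - Polynomial.C (z i)⁻¹) := by
      intro i
      have hzz : Polynomial.C (z i) * Polynomial.C (z i)⁻¹ = 1 := by
        rw [← Polynomial.C_mul, mul_inv_cancel₀ (hz0 i), Polynomial.C_1]
      rw [map_neg, neg_mul, mul_sub, hzz]
      ring
    have hinj' : Function.Injective fun i : Fin k => (z i)⁻¹ := by
      intro a b hab
      exact hinj (inv_injective hab)
    have hroot : ∀ i : Fin k,
        (Polynomial.X - Polynomial.C (z i)⁻¹) ∣ (1 - Polynomial.C c * Polynomial.X ^ d) := by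
      intro i
      rw [Polynomial.dvd_iff_isRoot]
      simp only [Polynomial.IsRoot, Polynomial.eval_sub, Polynomial.eval_one,
        Polynomial.eval_mul, Polynomial.eval_C, Polynomial.eval_pow, Polynomial.eval_X]
      rw [inv_pow, hz i, mul_inv_cancel₀ hc, sub_self]
    have hcop := Polynomial.pairwise_coprime_X_sub_C hinj'
    have hRdvd : (∏ i : Fin k, (Polynomial.X - Polynomial.C (z i)⁻¹))
        ∣ (1 - Polynomial.C c * Polynomial.X ^ d) :=
      Finset.prod_dvd_of_coprime (fun a _ b _ hab => hcop hab) (fun i _ => hroot i)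
    rw [hP]
    calc (∏ i : Fin k, (1 - Polynomial.C (z i) * Polynomial.X))
        = (∏ i : Fin k, Polynomial.C (-(z i))) *
          ∏ i : Fin k, (Polynomial.X - Polynomial.C (z i)⁻¹) := by
          rw [← Finset.prod_mul_distrib]; exact Finset.prod_congr rfl fun i _ => hfac i
      _ ∣ (1 - Polynomial.C c * Polynomial.X ^ d) := by
          have hu : IsUnit (∏ i : Fin k, Polynomial.C (-(z i))) := by
            rw [← map_prod]
            exact Polynomial.isUnit_C.mpr
              (isUnit_iff_ne_zero.mpr
                (Finset.prod_ne_zero_iff.mpr fun i _ => neg_ne_zero.mpr (hz0 i)))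
          rw [hu.mul_left_dvd]
          exact hRdvd
  obtain ⟨Q, hQ⟩ := hdvd
  -- degrees
  have hPne : ∀ i : Fin k, (1 - Polynomial.C (z i) * Polynomial.X) ≠ 0 := by
    intro i h
    have := congrArg (fun p => Polynomial.coeff p 0) h
    simpa using this
  have hdegP : P.natDegree = k := by
    rw [hP, Polynomial.natDegree_prod _ _ (fun i _ => hPne i)]
    have : ∀ i : Fin k, (1 - Polynomial.C (z i) * Polynomial.X).natDegree = 1 := by
      intro i
      compute_degree!
      exact hz0 i
    simp [this]
  have hdegT : (1 - Polynomial.C c * Polynomial.X ^ d).natDegree = d := by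
    compute_degree!
    rw [if_neg (by omega : ¬ d = 0)]
    simpa using hc
  have hTne : (1 - Polynomial.C c * Polynomial.X ^ d) ≠ 0 := by
    intro h
    rw [h, Polynomial.natDegree_zero] at hdegT
    omega
  have hPne' : P ≠ 0 := fun h => hTne (by rw [hQ, h, zero_mul])
  have hQne : Q ≠ 0 := fun h => hTne (by rw [hQ, h, mul_zero])
  have hdegQ : Q.natDegree = d - k := by
    have := Polynomial.natDegree_mul hPne' hQne
    rw [← hQ, hdegT, hdegP] at this
    omega
  -- power series
  set F : ℂ⟦X⟧ := ∏ i : Fin k, PowerSeries.mk (fun n => z i ^ n) with hF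
  have hPF : (P : ℂ⟦X⟧) * F = 1 := by
    have hcp : (P : ℂ⟦X⟧)
        = ∏ i : Fin k, ((1 - Polynomial.C (z i) * Polynomial.X : ℂ[X]) : ℂ⟦X⟧) := by
      rw [hP]
      simp only [← Polynomial.coeToPowerSeries.ringHom_apply, map_prod]
    rw [hcp, hF, ← Finset.prod_mul_distrib]
    apply Finset.prod_eq_one
    intro i _
    have : ((1 - Polynomial.C (z i) * Polynomial.X : ℂ[X]) : ℂ⟦X⟧)
        = 1 - PowerSeries.C (z i) * PowerSeries.X := by
      simp [Polynomial.coe_sub, Polynomial.coe_mul, Polynomial.coe_C, Polynomial.coe_X]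
    rw [this]
    exact geom_inv (z i)
  have hQF : (Q : ℂ⟦X⟧) = F * ((1 : ℂ⟦X⟧) - PowerSeries.C c * PowerSeries.X ^ d) := by
    have hcast : ((1 : ℂ⟦X⟧) - PowerSeries.C c * PowerSeries.X ^ d)
        = ((1 - Polynomial.C c * Polynomial.X ^ d : ℂ[X]) : ℂ⟦X⟧) := by
      simp [Polynomial.coe_sub, Polynomial.coe_mul, Polynomial.coe_C, Polynomial.coe_X,
        Polynomial.coe_pow, Polynomial.coe_one]
    rw [hcast, hQ, Polynomial.coe_mul, ← mul_assoc, mul_comm F, hPF, one_mul]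
  -- coefficient computation
  have hcoeffF : PowerSeries.coeff j F = 0 := by
    have h1 : PowerSeries.coeff j (Q : ℂ⟦X⟧) = PowerSeries.coeff j F := by
      rw [hQF, mul_sub, mul_one, map_sub]
      have : PowerSeries.coeff j (F * (PowerSeries.C c * PowerSeries.X ^ d)) = 0 := by
        rw [show F * (PowerSeries.C c * PowerSeries.X ^ d)
            = (PowerSeries.C c * F) * PowerSeries.X ^ d by ring]
        rw [PowerSeries.coeff_mul_X_pow']
        simp [Nat.not_le.mpr hjd]
      rw [this, sub_zero]
    have h2 : PowerSeries.coeff j (Q : ℂ⟦X⟧) = 0 := by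
      rw [Polynomial.coeff_coe]
      apply Polynomial.coeff_eq_zero_of_natDegree_lt
      omega
    rw [← h1, h2]
  -- identify coeff j F with the antidiagonalTuple sum
  rw [hF, PowerSeries.coeff_prod] at hcoeffF
  rw [← hcoeffF]
  refine Finset.sum_nbij' (i := fun μ => Finsupp.equivFunOnFinite.symm μ)
    (j := fun l => ⇑l) ?_ ?_ ?_ ?_ ?_
  · intro μ hμ
    rw [Finset.Nat.mem_antidiagonalTuple] at hμ
    rw [Finset.mem_finsuppAntidiag]
    constructor
    · rw [← hμ]
      exact Finset.sum_congr rfl fun i _ => rfl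
    · exact Finset.subset_univ _
  · intro l hl
    rw [Finset.mem_finsuppAntidiag] at hl
    rw [Finset.Nat.mem_antidiagonalTuple]
    exact hl.1
  · exact fun μ _ => Finsupp.equivFunOnFinite.apply_symm_apply μ
  · exact fun l _ => Finsupp.equivFunOnFinite.symm_apply_apply l
  · intro μ _
    apply Finset.prod_congr rfl
    intro i _
    simp [PowerSeries.coeff_mk]
end

section
/- Let f = ∏_{i=1}^k (y_i x + x_i y) = e₀ x^k + e₁ x^{k−1} y + ⋯ + e_k y^k in ℂ[x₁,y₁,…,x_k,y_k][x,y], where e_j = e_j(x₁,y₁,…,x_k,y_k) is the bihomogeneous elementary symmetric polynomial. For h ≥ 1 and a partition λ fitting in the k×h rectangle with conjugate λ' = (λ'₁,…,λ'_h) (padded with zeros), the h×h determinant det((e_{λ'_i + j − i})_{i,j=1}^h) equals ± e₀^{h−λ₁} s_λ(x₁,y₁,…,x_k,y_k), where s_λ is the bihomogeneous Schur polynomial and e_m := 0 for m < 0 or m > k. -/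
open MvPolynomial

noncomputable def aDet (k : ℕ) (l : Fin k → ℕ) : MvPolynomial (Fin k ⊕ Fin k) ℂ :=
  Matrix.det (Matrix.of fun i j : Fin k =>
    X (Sum.inl j) ^ l i * X (Sum.inr j) ^ (l ⟨0, i.pos⟩ - l i))

noncomputable def bialt (k : ℕ) (lam : Fin k → ℕ) : MvPolynomial (Fin k ⊕ Fin k) ℂ :=
  aDet k (fun i => lam i + (k - 1 - i.1))

noncomputable def eBih (k : ℕ) (j : ℤ) : MvPolynomial (Fin k ⊕ Fin k) ℂ :=
  if 0 ≤ j ∧ j ≤ (k : ℤ) then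
    ∑ A ∈ Finset.powersetCard j.toNat (Finset.univ : Finset (Fin k)),
      (∏ i ∈ A, X (Sum.inl i)) * ∏ i ∈ Aᶜ, X (Sum.inr i)
  else 0

namespace Stmt14

abbrev R (k : ℕ) := MvPolynomial (Fin k ⊕ Fin k) ℂ

/-- e₀ = ∏ y. -/
lemma eBih_zero (k : ℕ) : eBih k 0 = ∏ i : Fin k, X (Sum.inr i) := by
  simp [eBih, Finset.powersetCard_zero]

lemma eBih_neg {k : ℕ} {j : ℤ} (hj : j < 0) : eBih k j = 0 := by
  rw [eBih, if_neg]; omega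

lemma eBih_gt {k : ℕ} {j : ℤ} (hj : (k : ℤ) < j) : eBih k j = 0 := by
  rw [eBih, if_neg]; omega

/-- generating identity: ∏_t (y_t u - x_t v) = Σ_m (-1)^m e_m u^{k-m} v^m. -/
lemma gen_id (k : ℕ) (u v : R k) :
    ∏ t : Fin k, (X (Sum.inr t) * u - X (Sum.inl t) * v) =
      ∑ m ∈ Finset.range (k + 1), (-1) ^ m * eBih k m * u ^ (k - m) * v ^ m := by
  have h1 : ∀ t : Fin k, X (Sum.inr t) * u - X (Sum.inl t) * v
      = (- (X (Sum.inl t) * v)) + X (Sum.inr t) * u := by intro t; ring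
  simp_rw [h1]
  rw [Finset.prod_add, Finset.sum_powerset]
  rw [Finset.card_univ, Fintype.card_fin]
  refine Finset.sum_congr rfl fun m hm => ?_
  rw [Finset.mem_range] at hm
  have hek : eBih k m = ∑ A ∈ Finset.powersetCard m (Finset.univ : Finset (Fin k)),
      (∏ i ∈ A, X (Sum.inl i)) * ∏ i ∈ Aᶜ, X (Sum.inr i) := by
    rw [eBih, if_pos (by constructor <;> omega)]
    norm_num
  rw [hek, Finset.mul_sum, Finset.sum_mul, Finset.sum_mul]
  refine Finset.sum_congr rfl fun A hA => ?_
  rw [Finset.mem_powersetCard_univ] at hA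
  have hcard : (Finset.univ \ A).card = k - m := by
    rw [Finset.card_sdiff_of_subset (Finset.subset_univ A), Finset.card_univ, Fintype.card_fin, hA]
  have h2 : (∏ i ∈ A, -(X (Sum.inl i) * v)) = (-1)^m * (∏ i ∈ A, X (Sum.inl i)) * v^m := by
    have : ∀ i : Fin k, -(X (Sum.inl i) * v) = ((-1) * v) * X (Sum.inl i) := by intro i; ring
    simp_rw [this]
    rw [Finset.prod_mul_distrib, Finset.prod_const, hA]
    ring
  have h3 : (∏ i ∈ Finset.univ \ A, (X (Sum.inr i) * u))
      = (∏ i ∈ Finset.univ \ A, X (Sum.inr i)) * u ^ (k - m) := by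
    rw [Finset.prod_mul_distrib, Finset.prod_const, hcard]
  rw [h2, h3, Finset.compl_eq_univ_sdiff]
  ring

/-- homogenized Vandermonde column entries -/
noncomputable def Vm (k h : ℕ) (c : Fin (k + h)) (i : Fin k) : R k :=
  X (Sum.inl i) ^ c.1 * X (Sum.inr i) ^ (k + h - 1 - c.1)

/-- banded matrix of signed elementary symmetric polys -/
noncomputable def Wm (k h : ℕ) (c : Fin (k + h)) (j : Fin h) : R k :=
  (-1) ^ (k + j.1 + c.1) * eBih k ((k : ℤ) + j.1 - c.1)

lemma orth (k h : ℕ) (hk : 1 ≤ k) (i : Fin k) (j : Fin h) :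
    ∑ c : Fin (k + h), Vm k h c i * Wm k h c j = 0 := by
  have key : ∑ c ∈ Finset.range (k + h), (X (Sum.inl i) ^ c * X (Sum.inr i) ^ (k + h - 1 - c) *
      ((-1) ^ (k + j.1 + c) * eBih k ((k : ℤ) + j.1 - c)) : R k) = 0 := by
    have hsub : Finset.Ico j.1 (k + j.1 + 1) ⊆ Finset.range (k + h) := by
      intro c hc
      rw [Finset.mem_Ico] at hc
      rw [Finset.mem_range]
      have := j.2
      omega
    rw [← Finset.sum_subset hsub (by
      intro c hc hc2
      rw [Finset.mem_range] at hc
      have hcc : c < j.1 ∨ k + j.1 + 1 ≤ c := by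
        by_contra hcon
        push_neg at hcon
        exact hc2 (Finset.mem_Ico.mpr ⟨by omega, by omega⟩)
      rcases hcc with hlt | hge
      · rw [eBih_gt (by omega : (k:ℤ) < (k:ℤ) + j.1 - c)]; ring
      · rw [eBih_neg (by omega : ((k:ℤ) + j.1 - c) < 0)]; ring)]
    rw [Finset.sum_Ico_eq_sum_range]
    rw [show k + j.1 + 1 - j.1 = k + 1 by omega]
    push_cast
    have hterm2 : ∀ m ∈ Finset.range (k + 1),
        (X (Sum.inl i) ^ (j.1 + m) * X (Sum.inr i) ^ (k + h - 1 - (j.1 + m)) *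
          ((-1) ^ (k + j.1 + (j.1 + m)) * eBih k ((k : ℤ) + j.1 - (j.1 + m))) : R k)
        = X (Sum.inl i) ^ j.1 * X (Sum.inr i) ^ (h - 1 - j.1) *
          ((-1) ^ (k - m) * eBih k ((k : ℤ) - m) * X (Sum.inl i) ^ m *
            X (Sum.inr i) ^ (k - m)) := by
      intro m hm
      rw [Finset.mem_range] at hm
      have hj := j.2
      have e1 : (k : ℤ) + (j.1 : ℤ) - ((j.1 : ℤ) + (m : ℤ)) = (k : ℤ) - m := by ring
      have e3 : ((-1 : R k)) ^ (k + j.1 + (j.1 + m)) = (-1) ^ (k - m) := by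
        rw [show k + j.1 + (j.1 + m) = (k - m) + 2 * (j.1 + m) + (m + m - 2 * m) by omega]
        rw [show (m + m - 2*m) = 0 by omega]
        rw [add_zero, pow_add, pow_mul, neg_one_sq, one_pow, mul_one]
      have e2 : k + h - 1 - (j.1 + m) = (h - 1 - j.1) + (k - m) := by omega
      rw [e1, e3, e2, pow_add, pow_add]
      ring
    rw [Finset.sum_congr rfl hterm2]
    rw [← Finset.mul_sum]
    have hz : ∏ t : Fin k, (X (Sum.inr t) * X (Sum.inl i) - X (Sum.inl t) * X (Sum.inr i) : R k)
        = 0 := by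
      apply Finset.prod_eq_zero (Finset.mem_univ i)
      ring
    have hsum0 : ∑ m ∈ Finset.range (k + 1), ((-1) ^ m * eBih k m * X (Sum.inl i) ^ (k - m) *
        X (Sum.inr i) ^ m : R k) = 0 := by rw [← gen_id, hz]
    have hrefl := Finset.sum_range_reflect
      (fun m => ((-1) ^ m * eBih k m * X (Sum.inl i) ^ (k - m) * X (Sum.inr i) ^ m : R k)) (k + 1)
    have hmain : ∑ m ∈ Finset.range (k + 1),
        ((-1) ^ (k - m) * eBih k ((k : ℤ) - m) * X (Sum.inl i) ^ m *
          X (Sum.inr i) ^ (k - m) : R k) = 0 := by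
      rw [← hsum0, ← hrefl]
      refine Finset.sum_congr rfl fun m hm => ?_
      rw [Finset.mem_range] at hm
      have e6 : k + 1 - 1 - m = k - m := by omega
      have e7 : ((k : ℤ)) - m = ((k - m : ℕ) : ℤ) := by
        rw [Nat.cast_sub (by omega : m ≤ k)]
      have e8 : k - (k - m) = m := by omega
      rw [e6, e7, e8]
    rw [hmain, mul_zero]
  exact (Fin.sum_univ_eq_sum_range (fun c => (X (Sum.inl i) ^ c * X (Sum.inr i) ^ (k + h - 1 - c) *
      ((-1) ^ (k + j.1 + c) * eBih k ((k : ℤ) + j.1 - c)) : R k)) (k + h)).trans key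

def cfun (k : ℕ) (lam : Fin k → ℕ) (v : ℕ) : ℕ :=
  (Finset.univ.filter (fun t : Fin k => v ≤ lam t)).card

lemma cfun_le (k : ℕ) (lam : Fin k → ℕ) (v : ℕ) : cfun k lam v ≤ k := by
  have := Finset.card_filter_le (Finset.univ : Finset (Fin k)) (fun t => v ≤ lam t)
  simpa [cfun] using this

lemma cfun_anti (k : ℕ) (lam : Fin k → ℕ) {v w : ℕ} (hvw : v ≤ w) :
    cfun k lam w ≤ cfun k lam v := by
  apply Finset.card_le_card
  intro t ht
  simp only [Finset.mem_filter, Finset.mem_univ, true_and] at ht ⊢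
  omega

lemma lt_cfun_iff {k : ℕ} {lam : Fin k → ℕ} (hanti : Antitone lam) (v : ℕ) (i : Fin k) :
    i.1 < cfun k lam v ↔ v ≤ lam i := by
  constructor
  · intro hlt
    by_contra hno
    push_neg at hno
    have hsub : (Finset.univ.filter (fun t : Fin k => v ≤ lam t)).card ≤ i.1 := by
      have := Finset.card_le_card_of_injOn (fun t : Fin k => t.1)
        (s := Finset.univ.filter (fun t : Fin k => v ≤ lam t)) (t := Finset.range i.1)
        (by
          intro t ht
          rw [Finset.mem_coe, Finset.mem_filter] at ht
          rw [Finset.mem_coe, Finset.mem_range]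
          by_contra hge
          push_neg at hge
          have : lam t ≤ lam i := hanti (Fin.le_def.mpr hge)
          omega)
        (fun a _ b _ hab => Fin.val_injective hab)
      simpa using this
    simp only [cfun] at hlt
    omega
  · intro hv
    have hsub : i.1 + 1 ≤ (Finset.univ.filter (fun t : Fin k => v ≤ lam t)).card := by
      have hik := i.2
      have := Finset.card_le_card_of_injOn
        (fun a : ℕ => if ha : a < k then (⟨a, ha⟩ : Fin k) else i)
        (s := Finset.range (i.1 + 1)) (t := Finset.univ.filter (fun t : Fin k => v ≤ lam t))
        (by
          intro a ha
          rw [Finset.mem_coe, Finset.mem_range] at ha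
          have hak : a < k := by omega
          simp only []
          rw [dif_pos hak, Finset.mem_coe, Finset.mem_filter]
          refine ⟨Finset.mem_univ _, le_trans hv (hanti ?_)⟩
          exact Fin.le_def.mpr (by show a ≤ i.1; omega))
        (by
          intro a ha b hb hab
          rw [Finset.mem_coe, Finset.mem_range] at ha hb
          have hak : a < k := by omega
          have hbk : b < k := by omega
          simp only [] at hab
          rw [dif_pos hak, dif_pos hbk] at hab
          simpa using hab)
      simpa using this
    simpa [cfun] using hsub

def slf (k h : ℕ) (lam : Fin k → ℕ) (hfit' : ∀ i, lam i ≤ h) : Fin k → Fin (k + h) :=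
  fun i => ⟨lam i + (k - 1 - i.1), by have := i.2; have := hfit' i; omega⟩

def tlf (k h : ℕ) (lam : Fin k → ℕ) : Fin h → Fin (k + h) :=
  fun j => ⟨k + j.1 - cfun k lam (j.1 + 1), by have := j.2; have := cfun_le k lam (j.1 + 1); omega⟩

def s0f (k h : ℕ) : Fin k → Fin (k + h) := fun i => ⟨k - 1 - i.1, by have := i.2; omega⟩

def t0f (k h : ℕ) : Fin h → Fin (k + h) := fun j => ⟨k + j.1, by have := j.2; omega⟩

lemma slf_inj {k h : ℕ} {lam : Fin k → ℕ} (hfit' : ∀ i, lam i ≤ h) (hanti : Antitone lam) :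
    Function.Injective (slf k h lam hfit') := by
  intro i i' heq
  have hv : lam i + (k - 1 - i.1) = lam i' + (k - 1 - i'.1) := congrArg Fin.val heq
  rcases lt_trichotomy i.1 i'.1 with hlt | heqv | hgt
  · have : lam i' ≤ lam i := hanti (Fin.le_def.mpr (by omega))
    have := i'.2
    omega
  · exact Fin.ext heqv
  · have : lam i ≤ lam i' := hanti (Fin.le_def.mpr (by omega))
    have := i.2
    omega

lemma tlf_inj {k h : ℕ} {lam : Fin k → ℕ} : Function.Injective (tlf k h lam) := by
  intro j j' heq
  have hv : k + j.1 - cfun k lam (j.1 + 1) = k + j'.1 - cfun k lam (j'.1 + 1) :=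
    congrArg Fin.val heq
  have h1 := cfun_le k lam (j.1 + 1)
  have h2 := cfun_le k lam (j'.1 + 1)
  rcases lt_trichotomy j.1 j'.1 with hlt | heqv | hgt
  · have : cfun k lam (j'.1 + 1) ≤ cfun k lam (j.1 + 1) := cfun_anti k lam (by omega)
    omega
  · exact Fin.ext heqv
  · have : cfun k lam (j.1 + 1) ≤ cfun k lam (j'.1 + 1) := cfun_anti k lam (by omega)
    omega

lemma slf_ne_tlf {k h : ℕ} {lam : Fin k → ℕ} (hfit' : ∀ i, lam i ≤ h) (hanti : Antitone lam)
    (i : Fin k) (j : Fin h) : slf k h lam hfit' i ≠ tlf k h lam j := by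
  intro heq
  have hv : lam i + (k - 1 - i.1) = k + j.1 - cfun k lam (j.1 + 1) := congrArg Fin.val heq
  have hiff := lt_cfun_iff hanti (j.1 + 1) i
  have h1 := cfun_le k lam (j.1 + 1)
  have hik := i.2
  by_cases hc : j.1 + 1 ≤ lam i
  · have : i.1 < cfun k lam (j.1 + 1) := hiff.mpr hc
    omega
  · have : ¬ (i.1 < cfun k lam (j.1 + 1)) := fun hcon => hc (hiff.mp hcon)
    omega

lemma elam_bij {k h : ℕ} {lam : Fin k → ℕ} (hfit' : ∀ i, lam i ≤ h) (hanti : Antitone lam) :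
    Function.Bijective (Sum.elim (slf k h lam hfit') (tlf k h lam)) := by
  rw [Fintype.bijective_iff_injective_and_card]
  constructor
  · intro a b hab
    rcases a with a | a <;> rcases b with b | b <;> simp only [Sum.elim_inl, Sum.elim_inr] at hab
    · rw [slf_inj hfit' hanti hab]
    · exact absurd hab (slf_ne_tlf hfit' hanti a b)
    · exact absurd hab.symm (slf_ne_tlf hfit' hanti b a)
    · rw [tlf_inj hab]
  · simp

lemma s0f_ne_t0f {k h : ℕ} (i : Fin k) (j : Fin h) : s0f k h i ≠ t0f k h j := by
  intro heq
  have hv : k - 1 - i.1 = k + j.1 := congrArg Fin.val heq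
  have := i.2
  omega

lemma e0_bij {k h : ℕ} : Function.Bijective (Sum.elim (s0f k h) (t0f k h)) := by
  rw [Fintype.bijective_iff_injective_and_card]
  constructor
  · intro a b hab
    rcases a with a | a <;> rcases b with b | b <;> simp only [Sum.elim_inl, Sum.elim_inr] at hab
    · have hv : k - 1 - a.1 = k - 1 - b.1 := congrArg Fin.val hab
      have := a.2; have := b.2
      exact congrArg Sum.inl (Fin.val_injective (show a.1 = b.1 by omega))
    · exact absurd hab (s0f_ne_t0f a b)
    · exact absurd hab.symm (s0f_ne_t0f b a)
    · have hv : k + a.1 = k + b.1 := congrArg Fin.val hab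
      exact congrArg Sum.inr (Fin.val_injective (show a.1 = b.1 by omega))
  · simp

open Matrix

lemma t0f_inj (k h : ℕ) : Function.Injective (t0f k h) := by
  intro a b hab
  have hv : k + a.1 = k + b.1 := congrArg Fin.val hab
  exact Fin.val_injective (show a.1 = b.1 by omega)

noncomputable def CQ (k h : ℕ) : Matrix (Fin k ⊕ Fin h) (Fin k ⊕ Fin h) (R k) :=
  Matrix.of fun r c => Sum.elim (fun i => Vm k h (finSumFinEquiv r) i)
    (fun j => if finSumFinEquiv r = t0f k h j then 1 else 0) c

noncomputable def NQ (k h : ℕ) (lam : Fin k → ℕ) (hfit' : ∀ i, lam i ≤ h) :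
    Matrix (Fin k ⊕ Fin h) (Fin k ⊕ Fin h) (R k) :=
  Matrix.of fun r c => Sum.elim
    (fun i => if finSumFinEquiv r = slf k h lam hfit' i then 1 else 0)
    (fun j => Wm k h (finSumFinEquiv r) j) c

noncomputable def PM (k h : ℕ) (E : Fin k ⊕ Fin h → Fin (k + h)) :
    Matrix (Fin k ⊕ Fin h) (Fin k ⊕ Fin h) (R k) :=
  Matrix.of fun r c => if finSumFinEquiv r = E c then 1 else 0

lemma PM_orth (k h : ℕ) (E : Fin k ⊕ Fin h → Fin (k + h)) (hE : Function.Injective E) :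
    (PM k h E)ᵀ * PM k h E = 1 := by
  refine Matrix.ext fun a b => ?_
  simp only [PM, Matrix.mul_apply, Matrix.transpose_apply, Matrix.of_apply]
  rw [Fintype.sum_equiv finSumFinEquiv _
    (fun x => (if x = E a then (1 : R k) else 0) * (if x = E b then 1 else 0)) (fun r => rfl)]
  simp only [ite_mul, one_mul, zero_mul]
  rw [Finset.sum_ite_eq' Finset.univ (E a) (fun x => if x = E b then (1 : R k) else 0)]
  simp only [Finset.mem_univ, if_true, Matrix.one_apply, hE.eq_iff]

lemma PM_det_pm (k h : ℕ) (E : Fin k ⊕ Fin h → Fin (k + h)) (hE : Function.Injective E) :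
    (PM k h E).det = 1 ∨ (PM k h E).det = -1 := by
  rw [← mul_self_eq_one_iff]
  have := congrArg Matrix.det (PM_orth k h E hE)
  rwa [Matrix.det_mul, Matrix.det_transpose, Matrix.det_one] at this

lemma PM_mul (k h : ℕ) (E : Fin k ⊕ Fin h → Fin (k + h))
    (M : Matrix (Fin k ⊕ Fin h) (Fin k ⊕ Fin h) (R k)) (a b : Fin k ⊕ Fin h) :
    ((PM k h E)ᵀ * M) a b = M (finSumFinEquiv.symm (E a)) b := by
  simp only [PM, Matrix.mul_apply, Matrix.transpose_apply, Matrix.of_apply]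
  rw [Fintype.sum_equiv finSumFinEquiv _
    (fun x => (if x = E a then (1 : R k) else 0) * M (finSumFinEquiv.symm x) b)
    (fun r => by simp [Equiv.symm_apply_apply])]
  simp only [ite_mul, one_mul, zero_mul]
  rw [Finset.sum_ite_eq' Finset.univ (E a) (fun x => M (finSumFinEquiv.symm x) b)]
  simp

section main

variable (k h : ℕ) (lam : Fin k → ℕ) (hfit' : ∀ i, lam i ≤ h)

lemma L1 (hk : 1 ≤ k) (hanti : Antitone lam) :
    (CQ k h)ᵀ * NQ k h lam hfit' = Matrix.fromBlocks
      (Matrix.of fun i i' : Fin k => Vm k h (slf k h lam hfit' i') i) 0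
      (Matrix.of fun (j : Fin h) (i' : Fin k) =>
        if t0f k h j = slf k h lam hfit' i' then 1 else 0)
      (Matrix.of fun j j' : Fin h => Wm k h (t0f k h j) j') := by
  refine Matrix.ext fun a b => ?_
  rcases a with i | j <;> rcases b with i' | j' <;>
    simp only [CQ, NQ, Matrix.mul_apply, Matrix.transpose_apply, Matrix.of_apply,
      Sum.elim_inl, Sum.elim_inr, Matrix.fromBlocks_apply₁₁, Matrix.fromBlocks_apply₁₂,
      Matrix.fromBlocks_apply₂₁, Matrix.fromBlocks_apply₂₂, Matrix.zero_apply]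
  · rw [Fintype.sum_equiv finSumFinEquiv _
      (fun c => Vm k h c i * (if c = slf k h lam hfit' i' then 1 else 0)) (fun r => rfl)]
    simp only [mul_ite, mul_one, mul_zero]
    rw [Finset.sum_ite_eq' Finset.univ (slf k h lam hfit' i') (fun c => Vm k h c i)]
    simp
  · rw [Fintype.sum_equiv finSumFinEquiv _
      (fun c => Vm k h c i * Wm k h c j') (fun r => rfl)]
    exact orth k h hk i j'
  · rw [Fintype.sum_equiv finSumFinEquiv _
      (fun c => (if c = t0f k h j then (1 : R k) else 0) *
        (if c = slf k h lam hfit' i' then 1 else 0)) (fun r => rfl)]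
    simp only [ite_mul, one_mul, zero_mul]
    rw [Finset.sum_ite_eq' Finset.univ (t0f k h j)
      (fun c => if c = slf k h lam hfit' i' then (1 : R k) else 0)]
    simp
  · rw [Fintype.sum_equiv finSumFinEquiv _
      (fun c => (if c = t0f k h j then (1 : R k) else 0) * Wm k h c j') (fun r => rfl)]
    simp only [ite_mul, one_mul, zero_mul]
    rw [Finset.sum_ite_eq' Finset.univ (t0f k h j) (fun c => Wm k h c j')]
    simp

lemma L2 : (PM k h (Sum.elim (s0f k h) (t0f k h)))ᵀ * CQ k h = Matrix.fromBlocks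
    (Matrix.of fun i i' : Fin k => Vm k h (s0f k h i) i') 0
    (Matrix.of fun (j : Fin h) (i' : Fin k) => Vm k h (t0f k h j) i') 1 := by
  refine Matrix.ext fun a b => ?_
  rw [PM_mul]
  rcases a with i | j <;> rcases b with i' | j' <;>
    simp only [CQ, Matrix.of_apply, Sum.elim_inl, Sum.elim_inr, Equiv.apply_symm_apply,
      Matrix.fromBlocks_apply₁₁, Matrix.fromBlocks_apply₁₂, Matrix.fromBlocks_apply₂₁,
      Matrix.fromBlocks_apply₂₂, Matrix.zero_apply]
  · rw [if_neg (s0f_ne_t0f i j')]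
  · rw [Matrix.one_apply]
    by_cases hjj : j = j'
    · rw [if_pos (by rw [hjj]), if_pos hjj]
    · rw [if_neg (fun hc => hjj (t0f_inj k h hc)), if_neg hjj]

lemma L3 (hanti : Antitone lam) :
    (PM k h (Sum.elim (slf k h lam hfit') (tlf k h lam)))ᵀ * NQ k h lam hfit' =
    Matrix.fromBlocks 1
    (Matrix.of fun (i : Fin k) (j' : Fin h) => Wm k h (slf k h lam hfit' i) j') 0
    (Matrix.of fun j j' : Fin h => Wm k h (tlf k h lam j) j') := by
  refine Matrix.ext fun a b => ?_
  rw [PM_mul]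
  rcases a with i | j <;> rcases b with i' | j' <;>
    simp only [NQ, Matrix.of_apply, Sum.elim_inl, Sum.elim_inr, Equiv.apply_symm_apply,
      Matrix.fromBlocks_apply₁₁, Matrix.fromBlocks_apply₁₂, Matrix.fromBlocks_apply₂₁,
      Matrix.fromBlocks_apply₂₂, Matrix.zero_apply]
  · rw [Matrix.one_apply]
    by_cases hii : i = i'
    · rw [if_pos (by rw [hii]), if_pos hii]
    · rw [if_neg (fun hc => hii (slf_inj hfit' hanti hc)), if_neg hii]
  · rw [if_neg (fun hc => (slf_ne_tlf hfit' hanti i' j) hc.symm)]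

end main

lemma npow_neg_one {k : ℕ} {a b : ℕ} (hab : a % 2 = b % 2) : ((-1 : R k)) ^ a = (-1) ^ b := by
  have f : ∀ c : ℕ, ((-1 : R k)) ^ c = (-1) ^ (c % 2) := by
    intro c
    conv_lhs => rw [← Nat.div_add_mod c 2]
    rw [pow_add, pow_mul, neg_one_sq, one_pow, one_mul]
  rw [f a, f b, hab]

lemma detW0 (k h : ℕ) :
    (Matrix.of fun j j' : Fin h => Wm k h (t0f k h j) j').det = (eBih k 0) ^ h := by
  rw [Matrix.det_of_upperTriangular (by
    intro a b hba
    show Wm k h (t0f k h a) b = 0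
    unfold Wm t0f
    rw [eBih_neg (by
      show ((k : ℤ) + b.1 - ((k + a.1 : ℕ) : ℤ)) < 0
      push_cast
      simp only [id] at hba
      have : b.1 < a.1 := hba
      omega), mul_zero])]
  have hdiag : ∀ j : Fin h, Wm k h (t0f k h j) j = eBih k 0 := by
    intro j
    show (-1 : R k) ^ (k + j.1 + (t0f k h j).1) * eBih k ((k : ℤ) + j.1 - ((t0f k h j).1 : ℤ))
      = eBih k 0
    have hv : (t0f k h j).1 = k + j.1 := rfl
    rw [hv, show ((k : ℤ) + j.1 - ((k + j.1 : ℕ) : ℤ)) = 0 by push_cast; ring,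
      npow_neg_one (a := k + j.1 + (k + j.1)) (b := 0) (by omega), pow_zero, one_mul]
  calc ∏ j : Fin h, (Matrix.of fun j j' : Fin h => Wm k h (t0f k h j) j') j j
      = ∏ j : Fin h, eBih k 0 := Finset.prod_congr rfl (fun j _ => hdiag j)
    _ = (eBih k 0) ^ h := by rw [Finset.prod_const, Finset.card_univ, Fintype.card_fin]

lemma detWl (k h : ℕ) (lam : Fin k → ℕ) :
    ∃ ε : R k, (ε = 1 ∨ ε = -1) ∧
    (Matrix.of fun j j' : Fin h => Wm k h (tlf k h lam j) j').det
      = ε * (Matrix.of fun i j : Fin h =>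
          eBih k (((cfun k lam (i.1 + 1) : ℤ) + j.1) - i.1)).det := by
  have hent : ∀ j j' : Fin h, Wm k h (tlf k h lam j) j'
      = (-1 : R k) ^ (j.1 + cfun k lam (j.1 + 1)) *
        (Matrix.of (fun a b : Fin h => (-1 : R k) ^ b.1 *
          (Matrix.of fun i j : Fin h =>
            eBih k (((cfun k lam (i.1 + 1) : ℤ) + j.1) - i.1)) a b) j j') := by
    intro j j'
    have hc := cfun_le k lam (j.1 + 1)
    show (-1 : R k) ^ (k + j'.1 + (tlf k h lam j).1) *
        eBih k ((k : ℤ) + j'.1 - ((tlf k h lam j).1 : ℤ))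
      = (-1 : R k) ^ (j.1 + cfun k lam (j.1 + 1)) * ((-1 : R k) ^ j'.1 *
          eBih k (((cfun k lam (j.1 + 1) : ℤ) + j'.1) - j.1))
    have hv : (tlf k h lam j).1 = k + j.1 - cfun k lam (j.1 + 1) := rfl
    rw [hv, show ((k : ℤ) + j'.1 - ((k + j.1 - cfun k lam (j.1 + 1) : ℕ) : ℤ))
        = (((cfun k lam (j.1 + 1) : ℤ) + j'.1) - j.1) by
      rw [Nat.cast_sub (by omega)]; push_cast; ring]
    rw [npow_neg_one (a := k + j'.1 + (k + j.1 - cfun k lam (j.1 + 1)))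
      (b := (j.1 + cfun k lam (j.1 + 1)) + j'.1) (by omega), pow_add]
    ring
  rw [show (Matrix.of fun j j' : Fin h => Wm k h (tlf k h lam j) j')
    = Matrix.of (fun j j' : Fin h => (-1 : R k) ^ (j.1 + cfun k lam (j.1 + 1)) *
        (Matrix.of (fun a b : Fin h => (-1 : R k) ^ b.1 *
          (Matrix.of fun i j : Fin h =>
            eBih k (((cfun k lam (i.1 + 1) : ℤ) + j.1) - i.1)) a b) j j'))
    from Matrix.ext fun j j' => hent j j']
  rw [Matrix.det_mul_column, Matrix.det_mul_row]
  rw [Finset.prod_pow_eq_pow_sum, Finset.prod_pow_eq_pow_sum]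
  refine ⟨(-1 : R k) ^ (∑ i : Fin h, (i.1 + cfun k lam (i.1 + 1)))
    * (-1 : R k) ^ (∑ i : Fin h, i.1), ?_, by ring⟩
  rw [← pow_add]
  rcases Nat.even_or_odd ((∑ i : Fin h, (i.1 + cfun k lam (i.1 + 1))) + ∑ i : Fin h, i.1)
    with he | ho
  · exact Or.inl he.neg_one_pow
  · exact Or.inr ho.neg_one_pow

lemma detVl (k h : ℕ) (lam : Fin k → ℕ) (hfit' : ∀ i, lam i ≤ h) (hanti : Antitone lam)
    (hk : 1 ≤ k) :
    (Matrix.of fun i i' : Fin k => Vm k h (slf k h lam hfit' i) i').det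
      = eBih k 0 ^ (h - lam ⟨0, hk⟩) * bialt k lam := by
  have hent : ∀ i i' : Fin k, Vm k h (slf k h lam hfit' i) i'
      = X (Sum.inr i') ^ (h - lam ⟨0, hk⟩) *
        (Matrix.of (fun a j : Fin k => X (Sum.inl j) ^ (lam a + (k - 1 - a.1)) *
          X (Sum.inr j) ^ ((lam ⟨0, hk⟩ + (k - 1 - (0:ℕ))) - (lam a + (k - 1 - a.1)))) i i') := by
    intro i i'
    show X (Sum.inl i') ^ (slf k h lam hfit' i).1 *
        X (Sum.inr i') ^ (k + h - 1 - (slf k h lam hfit' i).1) = _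
    have hv : (slf k h lam hfit' i).1 = lam i + (k - 1 - i.1) := rfl
    have h0 : lam i ≤ lam ⟨0, hk⟩ := hanti (Fin.le_def.mpr (Nat.zero_le _))
    have h1 : lam ⟨0, hk⟩ ≤ h := hfit' _
    have h2 := i.2
    rw [hv, Matrix.of_apply, show k + h - 1 - (lam i + (k - 1 - i.1))
      = (h - lam ⟨0, hk⟩) + ((lam ⟨0, hk⟩ + (k - 1 - (0:ℕ))) - (lam i + (k - 1 - i.1)))
      by omega, pow_add]
    ring
  rw [show (Matrix.of fun i i' : Fin k => Vm k h (slf k h lam hfit' i) i')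
    = Matrix.of (fun i i' : Fin k => X (Sum.inr i') ^ (h - lam ⟨0, hk⟩) *
        (Matrix.of (fun a j : Fin k => X (Sum.inl j) ^ (lam a + (k - 1 - a.1)) *
          X (Sum.inr j) ^ ((lam ⟨0, hk⟩ + (k - 1 - (0:ℕ))) - (lam a + (k - 1 - a.1)))) i i'))
    from Matrix.ext fun i i' => hent i i']
  rw [Matrix.det_mul_row, Finset.prod_pow, ← eBih_zero]
  congr 1

lemma e0_ne_zero (k : ℕ) : eBih k 0 ≠ 0 := by
  rw [eBih_zero]
  exact Finset.prod_ne_zero_iff.mpr fun i _ => MvPolynomial.X_ne_zero _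

lemma bialt0_ne_zero (k : ℕ) (hk : 1 ≤ k) : bialt k (fun _ => 0) ≠ 0 := by
  intro hc
  set v : Fin k → ℂ := fun j => (j.1 : ℂ) + 1 with hv
  have hvinj : Function.Injective v := by
    intro a b hab
    simp only [hv] at hab
    have : (a.1 : ℂ) = b.1 := by
      have := add_right_cancel hab
      exact_mod_cast this
    exact Fin.val_injective (Nat.cast_injective this)
  set f : R k →+* ℂ := (aeval (Sum.elim (fun j : Fin k => v j) (fun _ : Fin k => (1 : ℂ)))
    : R k →ₐ[ℂ] ℂ).toRingHom with hf
  have h1 : f (bialt k (fun _ => 0)) = 0 := by rw [hc]; exact map_zero f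
  have h2 : f (bialt k (fun _ => 0))
      = (Matrix.of fun i j : Fin k => v j ^ (0 + (k - 1 - i.1)) *
          1 ^ ((0 + (k - 1 - (⟨0, hk⟩ : Fin k).1)) - (0 + (k - 1 - i.1)))).det := by
    show f (Matrix.det _) = _
    rw [RingHom.map_det]
    congr 1
    refine Matrix.ext fun i j => ?_
    simp [hf, hv, Vm]
  have h3 : (Matrix.of fun i j : Fin k => v j ^ (0 + (k - 1 - i.1)) *
      1 ^ ((0 + (k - 1 - (⟨0, hk⟩ : Fin k).1)) - (0 + (k - 1 - i.1)))).det ≠ 0 := by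
    have hM : (Matrix.of fun i j : Fin k => v j ^ (0 + (k - 1 - i.1)) *
        1 ^ ((0 + (k - 1 - (⟨0, hk⟩ : Fin k).1)) - (0 + (k - 1 - i.1))))
        = ((Matrix.vandermonde v)ᵀ).submatrix (⇑(Fin.revPerm : Equiv.Perm (Fin k))) id := by
      refine Matrix.ext fun i j => ?_
      simp only [Matrix.of_apply, Matrix.submatrix_apply, Matrix.transpose_apply,
        Matrix.vandermonde, one_pow, mul_one, id, Fin.revPerm_apply]
      congr 1
      rw [Fin.val_rev]
      omega
    rw [hM, Matrix.det_permute, Matrix.det_transpose]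
    have hvd : (Matrix.vandermonde v).det ≠ 0 := Matrix.det_vandermonde_ne_zero_iff.mpr hvinj
    intro hzero
    rcases Int.units_eq_one_or (Equiv.Perm.sign (Fin.revPerm : Equiv.Perm (Fin k))) with hs | hs <;>
      rw [hs] at hzero <;> simp at hzero <;> exact hvd hzero
  exact h3 (h2 ▸ h1)

set_option maxHeartbeats 1000000 in
theorem stmt14' (k h : ℕ) (hk : 1 ≤ k) (hh : 1 ≤ h)
    (lam : Fin k → ℕ) (hanti : Antitone lam) (hfit : lam ⟨0, hk⟩ ≤ h)
    (s : MvPolynomial (Fin k ⊕ Fin k) ℂ)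
    (hs : bialt k (fun _ => 0) * s = bialt k lam) :
    (Matrix.of fun i j : Fin h =>
        eBih k (((cfun k lam (i.1 + 1) : ℤ) + j.1) - i.1)).det =
      eBih k 0 ^ (h - lam ⟨0, hk⟩) * s ∨
    (Matrix.of fun i j : Fin h =>
        eBih k (((cfun k lam (i.1 + 1) : ℤ) + j.1) - i.1)).det =
      - (eBih k 0 ^ (h - lam ⟨0, hk⟩) * s) := by
  have hfit' : ∀ i, lam i ≤ h := fun i =>
    le_trans (hanti (Fin.le_def.mpr (Nat.zero_le _))) hfit
  obtain ⟨ε, he, hWl⟩ := detWl k h lam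
  have hd0 := PM_det_pm k h (Sum.elim (s0f k h) (t0f k h)) e0_bij.1
  have hdl := PM_det_pm k h (Sum.elim (slf k h lam hfit') (tlf k h lam))
    (elam_bij hfit' hanti).1
  set Dm := (Matrix.of fun i j : Fin h =>
    eBih k (((cfun k lam (i.1 + 1) : ℤ) + j.1) - i.1)) with hDmdef
  set d0 := (PM k h (Sum.elim (s0f k h) (t0f k h))).det with hd0def
  set dl := (PM k h (Sum.elim (slf k h lam hfit') (tlf k h lam))).det with hdldef
  have hE1 : (CQ k h).det * (NQ k h lam hfit').det
      = (eBih k 0 ^ (h - lam ⟨0, hk⟩) * bialt k lam) * (eBih k 0) ^ h := by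
    rw [← Matrix.det_transpose (CQ k h), ← Matrix.det_mul, L1 k h lam hfit' hk hanti,
      Matrix.det_fromBlocks_zero₁₂, detW0]
    congr 1
    rw [show (Matrix.of fun i i' : Fin k => Vm k h (slf k h lam hfit' i') i)
      = (Matrix.of fun i i' : Fin k => Vm k h (slf k h lam hfit' i) i')ᵀ from rfl,
      Matrix.det_transpose, detVl k h lam hfit' hanti hk]
  have hs0 : ∀ i : Fin k, s0f k h i = slf k h (fun _ => 0) (fun _ => Nat.zero_le h) i :=
    fun i => Fin.val_injective (show k - 1 - i.1 = 0 + (k - 1 - i.1) by omega)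
  have hE2 : d0 * (CQ k h).det = eBih k 0 ^ h * bialt k (fun _ => 0) := by
    rw [hd0def, ← Matrix.det_transpose (PM k h (Sum.elim (s0f k h) (t0f k h))),
      ← Matrix.det_mul, L2, Matrix.det_fromBlocks_zero₁₂, Matrix.det_one, mul_one]
    rw [show (Matrix.of fun i i' : Fin k => Vm k h (s0f k h i) i')
      = (Matrix.of fun i i' : Fin k =>
          Vm k h (slf k h (fun _ => 0) (fun _ => Nat.zero_le h) i) i')
      from Matrix.ext fun i i' => by
        simp only [Matrix.of_apply]
        rw [hs0 i]]
    rw [detVl k h (fun _ => 0) (fun _ => Nat.zero_le h) (fun _ _ _ => le_refl 0) hk,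
      Nat.sub_zero]
  have hE3 : dl * (NQ k h lam hfit').det = ε * Dm.det := by
    rw [hdldef,
      ← Matrix.det_transpose (PM k h (Sum.elim (slf k h lam hfit') (tlf k h lam))),
      ← Matrix.det_mul, L3 k h lam hfit' hanti, Matrix.det_fromBlocks_zero₂₁,
      Matrix.det_one, one_mul, hWl]
  have hne : eBih k 0 ^ h * bialt k (fun _ => 0) ≠ 0 :=
    mul_ne_zero (pow_ne_zero _ (e0_ne_zero k)) (bialt0_ne_zero k hk)
  have key : (eBih k 0 ^ h * bialt k (fun _ => 0)) * (ε * Dm.det)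
      = (eBih k 0 ^ h * bialt k (fun _ => 0)) *
        ((d0 * dl) * (eBih k 0 ^ (h - lam ⟨0, hk⟩) * s)) := by
    calc (eBih k 0 ^ h * bialt k (fun _ => 0)) * (ε * Dm.det)
        = (d0 * (CQ k h).det) * (dl * (NQ k h lam hfit').det) := by rw [hE2, hE3]
      _ = (d0 * dl) * ((CQ k h).det * (NQ k h lam hfit').det) := by ring
      _ = (d0 * dl) * ((eBih k 0 ^ (h - lam ⟨0, hk⟩) * bialt k lam) * (eBih k 0) ^ h) := by
            rw [hE1]
      _ = _ := by rw [← hs]; ring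
  have hDm : ε * Dm.det = (d0 * dl) * (eBih k 0 ^ (h - lam ⟨0, hk⟩) * s) :=
    mul_left_cancel₀ hne key
  have hee : ε * ε = 1 := by rcases he with h' | h' <;> rw [h'] <;> norm_num
  have hfin : Dm.det = (ε * (d0 * dl)) * (eBih k 0 ^ (h - lam ⟨0, hk⟩) * s) := by
    have h2 := congrArg (fun x => ε * x) hDm
    rw [← mul_assoc, hee, one_mul] at h2
    rw [h2]; ring
  have hu : ε * (d0 * dl) = 1 ∨ ε * (d0 * dl) = -1 := by
    rcases he with h' | h' <;> rcases hd0 with h0 | h0 <;> rcases hdl with hl | hl <;>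
      rw [h', h0, hl] <;> norm_num
  rcases hu with hu | hu
  · left; rw [hfin, hu, one_mul]
  · right; rw [hfin, hu]; ring

end Stmt14


/-- For a partition `λ` fitting in the `k×h` rectangle with conjugate
`λ' = (λ'₁,…,λ'_h)` (where `λ'_i = #{j : λ_j ≥ i}`), the `h×h` determinant
`det((e_{λ'_i + j − i})_{i,j=1}^h)` equals `± e₀^{h−λ₁} s_λ`, where `s_λ` is the
bihomogeneous Schur polynomial (encoded by `a_{(k−1,…,0)} · s = a_{(λ+δ)}`) and
`e₀ = y₁⋯y_k`. -/
theorem stmt14 (k h : ℕ) (hk : 1 ≤ k) (hh : 1 ≤ h)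
    (lam : Fin k → ℕ) (hanti : Antitone lam) (hfit : lam ⟨0, by omega⟩ ≤ h)
    (s : MvPolynomial (Fin k ⊕ Fin k) ℂ)
    (hs : bialt k (fun _ => 0) * s = bialt k lam) :
    Matrix.det (Matrix.of fun i j : Fin h =>
        eBih k ((((Finset.univ.filter (fun t : Fin k => i.1 + 1 ≤ lam t)).card : ℤ)
          + j.1) - i.1)) =
      eBih k 0 ^ (h - lam ⟨0, by omega⟩) * s ∨
    Matrix.det (Matrix.of fun i j : Fin h =>
        eBih k ((((Finset.univ.filter (fun t : Fin k => i.1 + 1 ≤ lam t)).card : ℤ)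
          + j.1) - i.1)) =
      - (eBih k 0 ^ (h - lam ⟨0, by omega⟩) * s) :=
  Stmt14.stmt14' k h hk hh lam hanti hfit s hs
end

section
/- Let I ⊆ 𝕜[x₁,…,x_r] be a homogeneous ideal and N a monomial ideal. For every degree d, the rank of the matroid Trop((I+N)_d) equals r_d(Mon_d) − r_d(N_d), where r_d is the rank function of Trop(I_d), Mon_d is the set of all degree-d monomials, and N_d ⊆ Mon_d is the set of degree-d monomials in N. Equivalently, Trop(I+N) = Trop(I) ÷ N (looped contraction). -/
open MvPolynomial

/-- The set of monomials of degree `d` in `r` variables (with coefficient `1`). -/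
def monSet (𝕜 : Type*) [Field 𝕜] (r d : ℕ) : Set (MvPolynomial (Fin r) 𝕜) :=
  {p | ∃ μ : Fin r →₀ ℕ, (μ.sum fun _ e => e) = d ∧ p = monomial μ (1 : 𝕜)}

/-- The rank function of `Trop(I_d)`:
`r_d(S) = dim Span(S) − dim (I_d ∩ Span(S))`, i.e. `dim (Span(S)/(I_d ∩ Span(S)))`. -/
noncomputable def tropIdealRank {𝕜 : Type*} [Field 𝕜] {r : ℕ}
    (I : Ideal (MvPolynomial (Fin r) 𝕜)) (d : ℕ)
    (S : Set (MvPolynomial (Fin r) 𝕜)) : ℕ :=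
  Module.finrank 𝕜 ↥(Submodule.span 𝕜 S) -
    Module.finrank 𝕜
      ↥((Submodule.restrictScalars 𝕜 I ⊓ homogeneousSubmodule (Fin r) 𝕜 d) ⊓
          Submodule.span 𝕜 S)

section AuxStmt16

variable {𝕜 : Type*} [Field 𝕜] {r : ℕ}

lemma sum_eq_degree (μ : Fin r →₀ ℕ) : (μ.sum fun _ e => e) = μ.degree := rfl

lemma monSet_finite (d : ℕ) : (monSet 𝕜 r d).Finite := by
  apply Set.Finite.subset
    (Set.Finite.image (fun μ : Fin r →₀ ℕ => (monomial μ (1 : 𝕜)))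
      (Finset.univ.finsuppAntidiag d).finite_toSet)
  rintro p ⟨μ, hμ, rfl⟩
  refine ⟨μ, ?_, rfl⟩
  simp only [Finset.coe_sort_coe, Finset.mem_coe, Finset.mem_finsuppAntidiag]
  refine ⟨?_, Finset.subset_univ _⟩
  rw [← hμ]
  exact (Finsupp.sum_fintype μ (fun _ e => e) (fun _ => rfl)).symm

lemma span_monSet (d : ℕ) :
    Submodule.span 𝕜 (monSet 𝕜 r d) = homogeneousSubmodule (Fin r) 𝕜 d := by
  apply le_antisymm
  · rw [Submodule.span_le]
    rintro p ⟨μ, hμ, rfl⟩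
    exact isHomogeneous_monomial _ (sum_eq_degree μ ▸ hμ)
  · intro p hp
    rw [p.as_sum]
    apply Submodule.sum_mem
    intro v hv
    have hdeg : v.degree = d := by
      rw [Finsupp.degree_eq_weight_one]; exact hp (mem_support_iff.mp hv)
    have : (monomial v (coeff v p) : MvPolynomial (Fin r) 𝕜)
        = (coeff v p) • monomial v 1 := by
      rw [MvPolynomial.smul_monomial, smul_eq_mul, mul_one]
    rw [this]
    exact Submodule.smul_mem _ _ (Submodule.subset_span ⟨v, hdeg, rfl⟩)

lemma span_NSet (N : Ideal (MvPolynomial (Fin r) 𝕜))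
    (hN : ∀ p ∈ N, ∀ μ ∈ p.support, (monomial μ (1 : 𝕜)) ∈ N) (d : ℕ) :
    Submodule.span 𝕜 {p ∈ monSet 𝕜 r d | p ∈ N} =
      Submodule.restrictScalars 𝕜 N ⊓ homogeneousSubmodule (Fin r) 𝕜 d := by
  apply le_antisymm
  · rw [Submodule.span_le]
    rintro p ⟨⟨μ, hμ, rfl⟩, hpN⟩
    exact ⟨hpN, isHomogeneous_monomial _ (sum_eq_degree μ ▸ hμ)⟩
  · rintro p ⟨hpN, hpH⟩
    rw [p.as_sum]
    apply Submodule.sum_mem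
    intro v hv
    have hdeg : v.degree = d := by
      rw [Finsupp.degree_eq_weight_one]; exact hpH (mem_support_iff.mp hv)
    have : (monomial v (coeff v p) : MvPolynomial (Fin r) 𝕜)
        = (coeff v p) • monomial v 1 := by
      rw [MvPolynomial.smul_monomial, smul_eq_mul, mul_one]
    rw [this]
    refine Submodule.smul_mem _ _ (Submodule.subset_span ⟨⟨v, ?_, rfl⟩, hN p hpN v hv⟩)
    exact sum_eq_degree v ▸ hdeg

lemma hc_mem (N : Ideal (MvPolynomial (Fin r) 𝕜))
    (hN : ∀ p ∈ N, ∀ μ ∈ p.support, (monomial μ (1 : 𝕜)) ∈ N) (d : ℕ)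
    {b : MvPolynomial (Fin r) 𝕜} (hb : b ∈ N) : homogeneousComponent d b ∈ N := by
  rw [homogeneousComponent_apply]
  apply Ideal.sum_mem
  intro v hv
  have hv' : v ∈ b.support := Finset.mem_of_mem_filter v hv
  have : (monomial v (coeff v b) : MvPolynomial (Fin r) 𝕜)
      = C (coeff v b) * monomial v 1 := by
    rw [C_mul_monomial, mul_one]
  rw [this]
  exact Ideal.mul_mem_left _ _ (hN b hb v hv')

lemma inf_sup_eq (I N : Ideal (MvPolynomial (Fin r) 𝕜))
    (hI : ∀ p ∈ I, ∀ n : ℕ, homogeneousComponent n p ∈ I)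
    (hN : ∀ p ∈ N, ∀ μ ∈ p.support, (monomial μ (1 : 𝕜)) ∈ N) (d : ℕ) :
    Submodule.restrictScalars 𝕜 (I ⊔ N) ⊓ homogeneousSubmodule (Fin r) 𝕜 d =
      (Submodule.restrictScalars 𝕜 I ⊓ homogeneousSubmodule (Fin r) 𝕜 d) ⊔
        (Submodule.restrictScalars 𝕜 N ⊓ homogeneousSubmodule (Fin r) 𝕜 d) := by
  apply le_antisymm
  · rintro p ⟨hp, hpH⟩
    obtain ⟨a, ha, b, hb, rfl⟩ := Submodule.mem_sup.mp hp
    have hsum : homogeneousComponent d (a + b) = a + b :=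
      by simpa using homogeneousComponent_of_mem (m := d) hpH
    rw [map_add] at hsum
    refine Submodule.mem_sup.mpr ⟨homogeneousComponent d a,
      ⟨hI a ha d, homogeneousComponent_mem d a⟩,
      homogeneousComponent d b, ⟨hc_mem N hN d hb, homogeneousComponent_mem d b⟩, hsum⟩
  · apply sup_le
    · exact inf_le_inf_right _ (fun x hx => Submodule.mem_sup_left hx)
    · exact inf_le_inf_right _ (fun x hx => Submodule.mem_sup_right hx)


lemma key_rank {K V : Type*} [Field K] [AddCommGroup V] [Module K V]
    (A U W : Submodule K V) [FiniteDimensional K A] [FiniteDimensional K U]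
    [FiniteDimensional K W] :
    Module.finrank K ↥W - Module.finrank K ↥((A ⊔ U) ⊓ W) =
      (Module.finrank K ↥(U ⊔ W) - Module.finrank K ↥(A ⊓ (U ⊔ W))) -
        (Module.finrank K U - Module.finrank K ↥(A ⊓ U)) := by
  have e1 := Submodule.finrank_sup_add_finrank_inf_eq (A ⊔ U) W
  have e2 := Submodule.finrank_sup_add_finrank_inf_eq A (U ⊔ W)
  have e3 := Submodule.finrank_sup_add_finrank_inf_eq A U
  have h1 : A ⊔ (U ⊔ W) = (A ⊔ U) ⊔ W := (sup_assoc ..).symm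
  rw [h1] at e2
  have m1 : Module.finrank K ↥A ≤ Module.finrank K ↥(A ⊔ U) :=
    Submodule.finrank_mono le_sup_left
  have m2 : Module.finrank K ↥(A ⊔ U) ≤ Module.finrank K ↥((A ⊔ U) ⊔ W) :=
    Submodule.finrank_mono le_sup_left
  omega

end AuxStmt16

/-- Let `I` be a homogeneous ideal and `N` a monomial ideal in
`𝕜[x₁,…,x_r]`. For every `d`, the rank of `Trop((I+N)_d)` equals
`r_d(Mon_d) − r_d(N_d)`, where `r_d` is the rank function of `Trop(I_d)` and `N_d` is
the set of degree-`d` monomials in `N`; moreover `Trop(I+N) = Trop(I) ÷ N` (looped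
contraction): for any `T ⊆ Mon_d`, the `Trop((I+N)_d)`-rank of `T` is
`r_d(N_d ∪ T) − r_d(N_d)`. -/
theorem stmt16 {𝕜 : Type*} [Field 𝕜] (r : ℕ)
    (I N : Ideal (MvPolynomial (Fin r) 𝕜))
    (hI : ∀ p ∈ I, ∀ n : ℕ, homogeneousComponent n p ∈ I)
    (hN : ∀ p ∈ N, ∀ μ ∈ p.support, (monomial μ (1 : 𝕜)) ∈ N)
    (d : ℕ) :
    (tropIdealRank (I ⊔ N) d (monSet 𝕜 r d) =
      tropIdealRank I d (monSet 𝕜 r d) -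
        tropIdealRank I d {p ∈ monSet 𝕜 r d | p ∈ N}) ∧
    (∀ T ⊆ monSet 𝕜 r d,
      tropIdealRank (I ⊔ N) d T =
        tropIdealRank I d ({p ∈ monSet 𝕜 r d | p ∈ N} ∪ T) -
          tropIdealRank I d {p ∈ monSet 𝕜 r d | p ∈ N}) := by
  have part2 : ∀ T ⊆ monSet 𝕜 r d,
      tropIdealRank (I ⊔ N) d T =
        tropIdealRank I d ({p ∈ monSet 𝕜 r d | p ∈ N} ∪ T) -
          tropIdealRank I d {p ∈ monSet 𝕜 r d | p ∈ N} := by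
    intro T hT
    haveI hHfd : FiniteDimensional 𝕜 (homogeneousSubmodule (Fin r) 𝕜 d) := by
      rw [← span_monSet (𝕜 := 𝕜) (r := r) d]
      exact FiniteDimensional.span_of_finite 𝕜 (monSet_finite d)
    haveI hA : FiniteDimensional 𝕜
        ↥(Submodule.restrictScalars 𝕜 I ⊓ homogeneousSubmodule (Fin r) 𝕜 d) :=
      Submodule.finiteDimensional_of_le inf_le_right
    haveI hU : FiniteDimensional 𝕜
        ↥(Submodule.restrictScalars 𝕜 N ⊓ homogeneousSubmodule (Fin r) 𝕜 d) :=
      Submodule.finiteDimensional_of_le inf_le_right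
    haveI hW : FiniteDimensional 𝕜 ↥(Submodule.span 𝕜 T) :=
      Submodule.finiteDimensional_of_le
        (le_trans (Submodule.span_mono hT) (le_of_eq (span_monSet d)))
    unfold tropIdealRank
    rw [inf_sup_eq I N hI hN d, Submodule.span_union, span_NSet N hN d]
    exact key_rank _ _ _
  refine ⟨?_, part2⟩
  have h := part2 (monSet 𝕜 r d) subset_rfl
  rwa [Set.union_eq_self_of_subset_left (Set.sep_subset _ _)] at h
end
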